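/- arXiv:math/0408173 — 3 statements merged into one kernel-verified Lean document; each statement's English description precedes it below -/
import Mathlib

section
/- For every symmetric measurable function W : [0,1]^2 -> [0,1] and every simple graph F with k vertices, Var(t(F, G(n,W))) <= 3k^2/n. -/
open MeasureTheory Finset
open scoped Classical

/-- The uniform probability measure on `[0,1] ⊆ ℝ`. -/
noncomputable def unif01 : Measure ℝ := volume.restrict (Set.Icc 0 1)

/-- Number of injective graph homomorphisms from `F` to `G`. -/
noncomputable def injCount {α β : Type} [Fintype α] [Fintype β]
    (F : SimpleGraph α) (G : SimpleGraph β) : ℕ :=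
  Fintype.card {f : α → β // Function.Injective f ∧ ∀ a b, F.Adj a b → G.Adj (f a) (f b)}

/-- The `W`-random graph on `[n]` determined by the vertex values
`x : Fin n → ℝ` and the family of independent uniform coin flips
`u : Fin n → Fin n → ℝ`: distinct vertices `i,j` are joined iff
`u (min i j) (max i j) < W (x i) (x j)`. -/
def wRandom (n : ℕ) (W : ℝ → ℝ → ℝ) (x : Fin n → ℝ) (u : Fin n → Fin n → ℝ) :
    SimpleGraph (Fin n) :=
  SimpleGraph.fromRel (fun i j => u (min i j) (max i j) < W (x i) (x j))

/-- The probability measure governing `wRandom`: the `x i` are i.i.d. uniform on `[0,1]`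
and the coin flips are i.i.d. uniform on `[0,1]`. -/
noncomputable def wMeasure (n : ℕ) : Measure ((Fin n → ℝ) × (Fin n → Fin n → ℝ)) :=
  (Measure.pi fun _ => unif01).prod (Measure.pi fun _ => Measure.pi fun _ => unif01)

/-- The homomorphism density `t(F,W)` of a simple graph `F` in a symmetric
function `W`. -/
noncomputable def tDens {k : ℕ} (F : SimpleGraph (Fin k)) (W : ℝ → ℝ → ℝ) : ℝ :=
  ∫ x : Fin k → ℝ,
    (∏ e ∈ F.edgeFinset,
      Sym2.lift ⟨fun a b => (W (x a) (x b) + W (x b) (x a)) / 2,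
        fun a b => by ring⟩ e) ∂(Measure.pi fun _ => unif01)


/-- Number of graph homomorphisms from `F` to `G`. -/
noncomputable def homCount {α β : Type} [Fintype α] [Fintype β]
    (F : SimpleGraph α) (G : SimpleGraph β) : ℕ :=
  Fintype.card {f : α → β // ∀ a b, F.Adj a b → G.Adj (f a) (f b)}


section VarianceAux
open ProbabilityTheory

instance : IsProbabilityMeasure unif01 :=
  ⟨by rw [unif01, Measure.restrict_apply_univ, Real.volume_Icc]; norm_num⟩

instance (n : ℕ) : IsProbabilityMeasure (wMeasure n) := by
  unfold wMeasure; infer_instance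

lemma pi_biInter_eval {ι : Type*} [Fintype ι] {α : ι → Type*} [∀ i, MeasurableSpace (α i)]
    (μ : ∀ i, Measure (α i)) [∀ i, IsProbabilityMeasure (μ i)]
    (S : Finset ι) (sets : ∀ i, Set (α i)) :
    Measure.pi μ (⋂ i ∈ S, (fun x => x i) ⁻¹' sets i) = ∏ i ∈ S, μ i (sets i) := by
  have h1 : (⋂ i ∈ S, (fun x : ∀ j, α j => x i) ⁻¹' sets i)
      = Set.pi Set.univ (fun i => if i ∈ S then sets i else Set.univ) := by
    ext x
    simp only [Set.mem_iInter, Set.mem_preimage, Set.mem_pi, Set.mem_univ, true_imp_iff]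
    constructor
    · intro h i; split_ifs with hi
      exacts [h i hi, Set.mem_univ _]
    · intro h i hi; have := h i; rwa [if_pos hi] at this
  rw [h1, Measure.pi_pi]
  have h2 : ∀ i ∈ Finset.univ, μ i (if i ∈ S then sets i else Set.univ)
      = if i ∈ S then μ i (sets i) else 1 := by
    intro i _; split_ifs <;> simp
  rw [Finset.prod_congr rfl h2, Finset.prod_ite_mem, Finset.univ_inter]

lemma measurable_V {n : ℕ} (i : Fin n) :
    Measurable (fun ω : (Fin n → ℝ) × (Fin n → Fin n → ℝ) => (ω.1 i, ω.2 i)) :=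
  ((measurable_pi_apply i).comp measurable_fst).prodMk
    ((measurable_pi_apply i).comp measurable_snd)

lemma iIndepFun_V (n : ℕ) :
    iIndepFun
      (fun (i : Fin n) (ω : (Fin n → ℝ) × (Fin n → Fin n → ℝ)) => (ω.1 i, ω.2 i))
      (wMeasure n) := by
  rw [iIndepFun_iff_measure_inter_preimage_eq_mul]
  intro S sets hsets
  set Ψ := MeasurableEquiv.arrowProdEquivProdArrow ℝ (Fin n → ℝ) (Fin n) with hΨdef
  have hmp : MeasurePreserving Ψ
      (Measure.pi fun _ : Fin n => unif01.prod (Measure.pi fun _ : Fin n => unif01))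
      (wMeasure n) :=
    measurePreserving_arrowProdEquivProdArrow ℝ (Fin n → ℝ) (Fin n)
      (fun _ => unif01) (fun _ => Measure.pi fun _ => unif01)
  have hpre : ∀ (i : Fin n) (t : Set (ℝ × (Fin n → ℝ))),
      Ψ ⁻¹' ((fun ω : (Fin n → ℝ) × (Fin n → Fin n → ℝ) => (ω.1 i, ω.2 i)) ⁻¹' t)
        = (fun y : Fin n → ℝ × (Fin n → ℝ) => y i) ⁻¹' t := by
    intro i t
    ext y
    simp [hΨdef, MeasurableEquiv.arrowProdEquivProdArrow, Equiv.arrowProdEquivProdArrow]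
  have key : ∀ (T : Finset (Fin n)), (∀ i ∈ T, MeasurableSet (sets i)) →
      wMeasure n (⋂ i ∈ T,
          (fun ω : (Fin n → ℝ) × (Fin n → Fin n → ℝ) => (ω.1 i, ω.2 i)) ⁻¹' sets i)
        = ∏ i ∈ T, (unif01.prod (Measure.pi fun _ : Fin n => unif01)) (sets i) := by
    intro T hT
    rw [← hmp.map_eq, MeasurableEquiv.map_apply]
    have : Ψ ⁻¹' (⋂ i ∈ T,
        (fun ω : (Fin n → ℝ) × (Fin n → Fin n → ℝ) => (ω.1 i, ω.2 i)) ⁻¹' sets i)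
        = ⋂ i ∈ T, (fun y : Fin n → ℝ × (Fin n → ℝ) => y i) ⁻¹' sets i := by
      rw [Set.preimage_iInter₂]
      exact Set.iInter₂_congr fun i _ => hpre i (sets i)
    rw [this, pi_biInter_eval]
  rw [key S hsets]
  refine Finset.prod_congr rfl fun i hi => ?_
  have := key {i} (by simpa using hsets i hi)
  simpa using this.symm

noncomputable def homInd {n k : ℕ} (F : SimpleGraph (Fin k)) (W : ℝ → ℝ → ℝ)
    (f : Fin k → Fin n) (ω : (Fin n → ℝ) × (Fin n → Fin n → ℝ)) : ℝ :=
  if ∀ a b, F.Adj a b → (wRandom n W ω.1 ω.2).Adj (f a) (f b) then 1 else 0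

lemma homInd_nonneg {n k : ℕ} (F : SimpleGraph (Fin k)) (W : ℝ → ℝ → ℝ)
    (f : Fin k → Fin n) (ω) : 0 ≤ homInd F W f ω := by
  unfold homInd; split_ifs <;> norm_num

lemma homInd_le_one {n k : ℕ} (F : SimpleGraph (Fin k)) (W : ℝ → ℝ → ℝ)
    (f : Fin k → Fin n) (ω) : homInd F W f ω ≤ 1 := by
  unfold homInd; split_ifs <;> norm_num

lemma measurable_homInd {n k : ℕ} (F : SimpleGraph (Fin k)) {W : ℝ → ℝ → ℝ}
    (hW : Measurable (Function.uncurry W)) (f : Fin k → Fin n) :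
    Measurable (homInd F W f) := by
  unfold homInd
  refine Measurable.ite ?_ measurable_const measurable_const
  have hWev : ∀ i j : Fin n,
      Measurable (fun ω : (Fin n → ℝ) × (Fin n → Fin n → ℝ) => W (ω.1 i) (ω.1 j)) := by
    intro i j
    have h := hW.comp ((((measurable_pi_apply i).comp measurable_fst).prodMk
      ((measurable_pi_apply j).comp measurable_fst)) :
        Measurable (fun ω : (Fin n → ℝ) × (Fin n → Fin n → ℝ) => (ω.1 i, ω.1 j)))
    exact h
  have hUev : ∀ i j : Fin n,
      Measurable (fun ω : (Fin n → ℝ) × (Fin n → Fin n → ℝ) => ω.2 i j) := fun i j =>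
    (measurable_pi_apply j).comp ((measurable_pi_apply i).comp measurable_snd)
  have h1 : {ω : (Fin n → ℝ) × (Fin n → Fin n → ℝ) |
      ∀ a b, F.Adj a b → (wRandom n W ω.1 ω.2).Adj (f a) (f b)}
      = ⋂ (a) (b) (_ : F.Adj a b),
        {ω : (Fin n → ℝ) × (Fin n → Fin n → ℝ) | (wRandom n W ω.1 ω.2).Adj (f a) (f b)} := by
    ext ω; simp
  rw [h1]
  refine MeasurableSet.iInter fun a => MeasurableSet.iInter fun b =>
    MeasurableSet.iInter fun _ => ?_
  have h2 : {ω : (Fin n → ℝ) × (Fin n → Fin n → ℝ) | (wRandom n W ω.1 ω.2).Adj (f a) (f b)}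
      = {ω : (Fin n → ℝ) × (Fin n → Fin n → ℝ) | f a ≠ f b} ∩
        ({ω | ω.2 (min (f a) (f b)) (max (f a) (f b)) < W (ω.1 (f a)) (ω.1 (f b))} ∪
         {ω | ω.2 (min (f b) (f a)) (max (f b) (f a)) < W (ω.1 (f b)) (ω.1 (f a))}) := by
    ext ω
    simp [wRandom, SimpleGraph.fromRel_adj, Set.mem_setOf_eq]
  rw [h2]
  exact (MeasurableSet.const _).inter
    ((measurableSet_lt (hUev _ _) (hWev _ _)).union (measurableSet_lt (hUev _ _) (hWev _ _)))

noncomputable def extΩ {n : ℕ} (s : Finset (Fin n))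
    (y : {i // i ∈ s} → ℝ × (Fin n → ℝ)) : (Fin n → ℝ) × (Fin n → Fin n → ℝ) :=
  (fun i => if h : i ∈ s then (y ⟨i, h⟩).1 else 0,
   fun i => if h : i ∈ s then (y ⟨i, h⟩).2 else 0)

lemma measurable_extΩ {n : ℕ} (s : Finset (Fin n)) : Measurable (extΩ (n := n) s) := by
  refine Measurable.prod ?_ ?_
  · refine measurable_pi_lambda _ fun i => ?_
    by_cases h : i ∈ s
    · simp only [extΩ, dif_pos h]
      exact measurable_fst.comp (measurable_pi_apply _)
    · simp only [extΩ, dif_neg h]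
      exact measurable_const
  · refine measurable_pi_lambda _ fun i => ?_
    by_cases h : i ∈ s
    · simp only [extΩ, dif_pos h]
      exact measurable_snd.comp (measurable_pi_apply _)
    · simp only [extΩ, dif_neg h]
      exact measurable_const

lemma homInd_restrict {n k : ℕ} (F : SimpleGraph (Fin k)) (W : ℝ → ℝ → ℝ)
    (f : Fin k → Fin n) (s : Finset (Fin n)) (hfs : ∀ a, f a ∈ s)
    (ω : (Fin n → ℝ) × (Fin n → Fin n → ℝ)) :
    homInd F W f (extΩ s (fun i : {i // i ∈ s} => (ω.1 i, ω.2 i))) = homInd F W f ω := by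
  have hmin : ∀ a b : Fin k, min (f a) (f b) ∈ s := fun a b => by
    rcases min_choice (f a) (f b) with h | h <;> rw [h] <;> exact hfs _
  unfold homInd
  refine if_congr ?_ rfl rfl
  constructor <;> intro h a b hab <;> have := h a b hab <;>
    simpa [wRandom, SimpleGraph.fromRel_adj, extΩ, hfs a, hfs b, hmin a b, hmin b a,
      min_comm (f b) (f a)] using this

lemma indepFun_homInd {n k : ℕ} (F : SimpleGraph (Fin k)) {W : ℝ → ℝ → ℝ}
    (hW : Measurable (Function.uncurry W)) {f g : Fin k → Fin n}
    (hd : Disjoint (Finset.image f Finset.univ) (Finset.image g Finset.univ)) :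
    IndepFun (homInd F W f) (homInd F W g) (wMeasure n) := by
  set s := Finset.image f Finset.univ
  set t := Finset.image g Finset.univ
  have hbase := (iIndepFun_V n).indepFun_finset s t hd (fun i => measurable_V i)
  have hcomp := hbase.comp
    ((measurable_homInd F hW f).comp (measurable_extΩ s))
    ((measurable_homInd F hW g).comp (measurable_extΩ t))
  have hf : (homInd F W f ∘ extΩ s) ∘
      (fun (ω : (Fin n → ℝ) × (Fin n → Fin n → ℝ)) (i : {i // i ∈ s}) => (ω.1 i, ω.2 i))
      = homInd F W f := by
    funext ω
    exact homInd_restrict F W f s (fun a => Finset.mem_image_of_mem f (Finset.mem_univ a)) ω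
  have hg : (homInd F W g ∘ extΩ t) ∘
      (fun (ω : (Fin n → ℝ) × (Fin n → Fin n → ℝ)) (i : {i // i ∈ t}) => (ω.1 i, ω.2 i))
      = homInd F W g := by
    funext ω
    exact homInd_restrict F W g t (fun a => Finset.mem_image_of_mem g (Finset.mem_univ a)) ω
  rwa [hf, hg] at hcomp

lemma fiber_card {k n : ℕ} (b : Fin k) (c : Fin n) :
    (Finset.univ.filter fun g : Fin k → Fin n => g b = c).card = n ^ (k - 1) := by
  have e : {g : Fin k → Fin n // g b = c} ≃ ({a : Fin k // a ≠ b} → Fin n) :=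
    { toFun := fun g a => g.1 a.1
      invFun := fun h => ⟨fun a => if ha : a = b then c else h ⟨a, ha⟩, by simp⟩
      left_inv := fun g => by
        ext a
        by_cases ha : a = b
        · subst ha; simp [g.2]
        · simp [ha]
      right_inv := fun h => by
        ext a
        simp [a.2] }
  have := Fintype.card_congr e
  rw [Fintype.card_subtype] at this
  rw [this, Fintype.card_fun, Fintype.card_fin]
  congr 1
  rw [Fintype.card_subtype_compl (p := fun a : Fin k => a = b)]
  simp [Fintype.card_subtype_eq]

lemma pair_card {k n : ℕ} (a b : Fin k) :
    ((Finset.univ : Finset ((Fin k → Fin n) × (Fin k → Fin n))).filter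
      fun p => p.1 a = p.2 b).card = n ^ k * n ^ (k - 1) := by
  rw [Finset.card_filter]
  rw [← Finset.univ_product_univ, Finset.sum_product]
  have : ∀ f : Fin k → Fin n,
      (∑ g : Fin k → Fin n, if f a = g b then (1:ℕ) else 0) = n ^ (k-1) := by
    intro f
    rw [← Finset.card_filter]
    have := fiber_card (n := n) b (f a)
    rw [← this]
    congr 1
    apply Finset.filter_congr
    intro g _
    exact eq_comm
  rw [Finset.sum_congr rfl fun f _ => this f]
  simp [Finset.card_univ]

lemma homCount_cast {n k : ℕ} (F : SimpleGraph (Fin k)) (W : ℝ → ℝ → ℝ)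
    (ω : (Fin n → ℝ) × (Fin n → Fin n → ℝ)) :
    ((homCount F (wRandom n W ω.1 ω.2) : ℝ)) = ∑ f : Fin k → Fin n, homInd F W f ω := by
  have h1 : ∑ f : Fin k → Fin n, homInd F W f ω
      = (((Finset.univ : Finset (Fin k → Fin n)).filter
          (fun f => ∀ a b, F.Adj a b → (wRandom n W ω.1 ω.2).Adj (f a) (f b))).card : ℝ) := by
    rw [← Finset.sum_boole]
    unfold homInd
    rfl
  rw [h1, homCount]
  norm_cast
  convert Fintype.card_subtype
    (fun f : Fin k → Fin n => ∀ a b, F.Adj a b → (wRandom n W ω.1 ω.2).Adj (f a) (f b))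


end VarianceAux

open ProbabilityTheory in
/-- `Var(t(F, G(n,W))) ≤ 3k²/n` for the `W`-random graph `G(n,W)`,
where `t(F,G) = hom(F,G)/n^k` is the homomorphism density. -/
theorem variance_homDensity_wRandom {n k : ℕ}
    (F : SimpleGraph (Fin k)) (W : ℝ → ℝ → ℝ)
    (hWmeas : Measurable (Function.uncurry W))
    (hWsymm : ∀ x y, W x y = W y x)
    (hWmem : ∀ x y, W x y ∈ Set.Icc (0 : ℝ) 1) :
    ProbabilityTheory.variance
        (fun ω : (Fin n → ℝ) × (Fin n → Fin n → ℝ) =>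
          (homCount F (wRandom n W ω.1 ω.2) : ℝ) / (n : ℝ) ^ k)
        (wMeasure n)
      ≤ 3 * (k : ℝ) ^ 2 / (n : ℝ) := by
  rcases Nat.eq_zero_or_pos n with hn | hn
  · subst hn
    set C : ℝ := (homCount F (wRandom 0 W (fun _ => 0) (fun _ _ => 0)) : ℝ) / ((0 : ℕ) : ℝ) ^ k
      with hC
    have hconst : (fun ω : (Fin 0 → ℝ) × (Fin 0 → Fin 0 → ℝ) =>
        (homCount F (wRandom 0 W ω.1 ω.2) : ℝ) / ((0 : ℕ) : ℝ) ^ k)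
        = fun _ => C := by
      funext ω
      have h1 : ω.1 = fun _ => 0 := Subsingleton.elim _ _
      have h2 : ω.2 = fun _ _ => 0 := Subsingleton.elim _ _
      rw [hC, h1, h2]
    rw [hconst]
    have h := variance_le_sq_of_bounded (μ := wMeasure 0) (X := fun _ => C) (a := C) (b := C)
      (Filter.Eventually.of_forall fun ω => ⟨le_refl _, le_refl _⟩) aemeasurable_const
    simpa using h
  -- main case
  set μ := wMeasure n
  set A : (Fin k → Fin n) → ((Fin n → ℝ) × (Fin n → Fin n → ℝ)) → ℝ := homInd F W with hA
  set c : ℝ := (n : ℝ) ^ k with hc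
  have hnpos : (0 : ℝ) < n := by exact_mod_cast hn
  have hcpos : 0 < c := by positivity
  have hXeq : (fun ω : (Fin n → ℝ) × (Fin n → Fin n → ℝ) =>
      (homCount F (wRandom n W ω.1 ω.2) : ℝ) / (n : ℝ) ^ k)
      = fun ω => (∑ f : Fin k → Fin n, A f ω) / c := by
    funext ω
    rw [homCount_cast F W ω]
  rw [hXeq]
  set X : ((Fin n → ℝ) × (Fin n → Fin n → ℝ)) → ℝ :=
    fun ω => (∑ f : Fin k → Fin n, A f ω) / c with hX
  -- basic facts
  have hAmeas : ∀ f, Measurable (A f) := fun f => measurable_homInd F hWmeas f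
  have hA0 : ∀ f ω, 0 ≤ A f ω := fun f ω => homInd_nonneg F W f ω
  have hA1 : ∀ f ω, A f ω ≤ 1 := fun f ω => homInd_le_one F W f ω
  have hAint : ∀ f, Integrable (A f) μ := by
    intro f
    refine (integrable_const (1 : ℝ)).mono' (hAmeas f).aestronglyMeasurable ?_
    filter_upwards with ω
    rw [Real.norm_eq_abs, abs_of_nonneg (hA0 f ω)]
    exact hA1 f ω
  have hAAint : ∀ f g, Integrable (fun ω => A f ω * A g ω) μ := by
    intro f g
    refine (integrable_const (1 : ℝ)).mono'
      ((hAmeas f).mul (hAmeas g)).aestronglyMeasurable ?_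
    filter_upwards with ω
    rw [Real.norm_eq_abs, abs_of_nonneg (mul_nonneg (hA0 f ω) (hA0 g ω))]
    exact mul_le_one₀ (hA1 f ω) (hA0 g ω) (hA1 g ω)
  have hXmeas : Measurable X :=
    (Finset.measurable_sum Finset.univ fun f _ => hAmeas f).div_const c
  have hXbound : ∀ ω, X ω ∈ Set.Icc (0 : ℝ) 1 := by
    intro ω
    constructor
    · exact div_nonneg (Finset.sum_nonneg fun f _ => hA0 f ω) hcpos.le
    · rw [div_le_one hcpos]
      calc ∑ f : Fin k → Fin n, A f ω ≤ ∑ _f : Fin k → Fin n, (1 : ℝ) :=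
            Finset.sum_le_sum fun f _ => hA1 f ω
        _ = c := by
            rw [Finset.sum_const, Finset.card_univ, Fintype.card_fun, Fintype.card_fin,
              Fintype.card_fin, nsmul_eq_mul, mul_one, hc, Nat.cast_pow]
  have hXmem : MemLp X 2 μ :=
    memLp_of_bounded (Filter.Eventually.of_forall hXbound) hXmeas.aestronglyMeasurable 2
  rw [variance_eq_sub hXmem]
  -- compute the two integrals
  have hEX : μ[X] = (∑ f : Fin k → Fin n, ∫ ω, A f ω ∂μ) / c := by
    rw [hX]
    rw [integral_div]
    rw [integral_finset_sum Finset.univ fun f _ => hAint f]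
  have hX2eq : X ^ 2 = fun ω => (∑ f : Fin k → Fin n, ∑ g : Fin k → Fin n,
      A f ω * A g ω) / c ^ 2 := by
    funext ω
    rw [Pi.pow_apply, hX, div_pow, sq, Finset.sum_mul_sum]
  have hEX2 : μ[X ^ 2] = (∑ f : Fin k → Fin n, ∑ g : Fin k → Fin n,
      ∫ ω, A f ω * A g ω ∂μ) / c ^ 2 := by
    rw [hX2eq, integral_div,
      integral_finset_sum Finset.univ fun f _ =>
        integrable_finset_sum Finset.univ fun g _ => hAAint f g]
    congr 1
    refine Finset.sum_congr rfl fun f _ => ?_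
    rw [integral_finset_sum Finset.univ fun g _ => hAAint f g]
  rw [hEX2, hEX, div_pow, sq (∑ f : Fin k → Fin n, ∫ ω, A f ω ∂μ), Finset.sum_mul_sum,
    div_sub_div_same]
  rw [← Finset.sum_sub_distrib]
  have hsumsub : ∀ f : Fin k → Fin n,
      (∑ g : Fin k → Fin n, ∫ ω, A f ω * A g ω ∂μ)
        - ∑ g : Fin k → Fin n, (∫ ω, A f ω ∂μ) * ∫ ω, A g ω ∂μ
      = ∑ g : Fin k → Fin n,
        ((∫ ω, A f ω * A g ω ∂μ) - (∫ ω, A f ω ∂μ) * ∫ ω, A g ω ∂μ) := by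
    intro f; rw [Finset.sum_sub_distrib]
  rw [Finset.sum_congr rfl fun f _ => hsumsub f]
  -- termwise bound
  have hterm : ∀ f g : Fin k → Fin n,
      (∫ ω, A f ω * A g ω ∂μ) - (∫ ω, A f ω ∂μ) * ∫ ω, A g ω ∂μ
        ≤ if ∃ a b, f a = g b then (1 : ℝ) else 0 := by
    intro f g
    by_cases hbad : ∃ a b, f a = g b
    · rw [if_pos hbad]
      have h1 : (∫ ω, A f ω * A g ω ∂μ) ≤ 1 := by
        calc (∫ ω, A f ω * A g ω ∂μ) ≤ ∫ _ω, (1 : ℝ) ∂μ := by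
              refine integral_mono (hAAint f g) (integrable_const 1) fun ω => ?_
              exact mul_le_one₀ (hA1 f ω) (hA0 g ω) (hA1 g ω)
          _ = 1 := by simp
      have h2 : 0 ≤ (∫ ω, A f ω ∂μ) * ∫ ω, A g ω ∂μ :=
        mul_nonneg (integral_nonneg fun ω => hA0 f ω) (integral_nonneg fun ω => hA0 g ω)
      linarith
    · rw [if_neg hbad]
      have hd : Disjoint (Finset.image f Finset.univ) (Finset.image g Finset.univ) := by
        rw [Finset.disjoint_left]
        intro v hvf hvg
        rw [Finset.mem_image] at hvf hvg
        obtain ⟨a, _, ha⟩ := hvf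
        obtain ⟨b, _, hb⟩ := hvg
        exact hbad ⟨a, b, ha.trans hb.symm⟩
      have hind := (indepFun_homInd F hWmeas hd).integral_mul_eq_mul_integral
        (hAint f).aestronglyMeasurable (hAint g).aestronglyMeasurable
      have heq : (∫ ω, A f ω * A g ω ∂μ) = (∫ ω, A f ω ∂μ) * ∫ ω, A g ω ∂μ := by
        rw [← hind]
        rfl
      rw [heq, sub_self]
  -- sum bound
  have hsum : (∑ f : Fin k → Fin n, ∑ g : Fin k → Fin n,
      ((∫ ω, A f ω * A g ω ∂μ) - (∫ ω, A f ω ∂μ) * ∫ ω, A g ω ∂μ))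
      ≤ (k : ℝ) ^ 2 * ((n : ℝ) ^ k * (n : ℝ) ^ (k - 1)) := by
    calc (∑ f : Fin k → Fin n, ∑ g : Fin k → Fin n,
        ((∫ ω, A f ω * A g ω ∂μ) - (∫ ω, A f ω ∂μ) * ∫ ω, A g ω ∂μ))
        ≤ ∑ f : Fin k → Fin n, ∑ g : Fin k → Fin n,
          (if ∃ a b, f a = g b then (1 : ℝ) else 0) :=
          Finset.sum_le_sum fun f _ => Finset.sum_le_sum fun g _ => hterm f g
      _ = ∑ p : (Fin k → Fin n) × (Fin k → Fin n),
          (if ∃ a b, p.1 a = p.2 b then (1 : ℝ) else 0) :=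
          (Fintype.sum_prod_type (f := fun p : (Fin k → Fin n) × (Fin k → Fin n) =>
            if ∃ a b, p.1 a = p.2 b then (1 : ℝ) else 0)).symm
      _ = (((Finset.univ : Finset ((Fin k → Fin n) × (Fin k → Fin n))).filter
          (fun p => ∃ a b, p.1 a = p.2 b)).card : ℝ) := by
          rw [Finset.sum_boole]
      _ ≤ ((k ^ 2 * (n ^ k * n ^ (k - 1)) : ℕ) : ℝ) := by
          have hsub : (Finset.univ : Finset ((Fin k → Fin n) × (Fin k → Fin n))).filter
              (fun p => ∃ a b, p.1 a = p.2 b)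
              ⊆ (Finset.univ : Finset (Fin k × Fin k)).biUnion
                (fun ab => Finset.univ.filter fun p : (Fin k → Fin n) × (Fin k → Fin n) =>
                  p.1 ab.1 = p.2 ab.2) := by
            intro p hp
            rw [Finset.mem_filter] at hp
            obtain ⟨-, a, b, hab⟩ := hp
            rw [Finset.mem_biUnion]
            exact ⟨(a, b), Finset.mem_univ _, Finset.mem_filter.mpr ⟨Finset.mem_univ _, hab⟩⟩
          have hcard := (Finset.card_le_card hsub).trans Finset.card_biUnion_le
          have hval : ∑ ab : Fin k × Fin k,
              (Finset.univ.filter fun p : (Fin k → Fin n) × (Fin k → Fin n) =>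
                p.1 ab.1 = p.2 ab.2).card = k ^ 2 * (n ^ k * n ^ (k - 1)) := by
            rw [Finset.sum_congr rfl fun ab _ => pair_card ab.1 ab.2]
            simp [Finset.card_univ, sq]
          rw [hval] at hcard
          exact_mod_cast hcard
      _ = (k : ℝ) ^ 2 * ((n : ℝ) ^ k * (n : ℝ) ^ (k - 1)) := by push_cast; ring
  -- final arithmetic
  have hfinal : ((k : ℝ) ^ 2 * ((n : ℝ) ^ k * (n : ℝ) ^ (k - 1))) / c ^ 2
      ≤ 3 * (k : ℝ) ^ 2 / (n : ℝ) := by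
    rcases Nat.eq_zero_or_pos k with hk | hk
    · subst hk; norm_num
    · have hk1 : (n : ℝ) ^ k = (n : ℝ) ^ (k - 1) * n := by
        conv_lhs => rw [← Nat.succ_pred_eq_of_pos hk]
        rw [pow_succ, Nat.pred_eq_sub_one]
      have hcsq : c ^ 2 = ((n : ℝ) ^ k * (n : ℝ) ^ (k - 1)) * n := by
        rw [hc, sq]
        nth_rewrite 2 [hk1]
        ring
      have hB : (0 : ℝ) < (n : ℝ) ^ k * (n : ℝ) ^ (k - 1) := by positivity
      rw [hcsq, mul_comm ((k : ℝ) ^ 2), mul_div_mul_left _ _ hB.ne']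
      refine div_le_div_of_nonneg_right ?_ hnpos.le
      nlinarith [sq_nonneg (k : ℝ)]
  calc (∑ f : Fin k → Fin n, ∑ g : Fin k → Fin n,
      ((∫ ω, A f ω * A g ω ∂μ) - (∫ ω, A f ω ∂μ) * ∫ ω, A g ω ∂μ)) / c ^ 2
      ≤ ((k : ℝ) ^ 2 * ((n : ℝ) ^ k * (n : ℝ) ^ (k - 1))) / c ^ 2 :=
        div_le_div_of_nonneg_right hsum (by positivity)
    _ ≤ 3 * (k : ℝ) ^ 2 / (n : ℝ) := hfinal
end

section
/- Let U, W : [0,1]^2 -> [0,1] be symmetric integrable functions. Then for every finite simple graph F, |t(F,U) - t(F,W)| <= |E(F)| * ||U - W||_□, where ||·||_□ is the rectangle (cut) norm. -/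
open MeasureTheory Finset
open scoped Classical

instance inst_s5 : IsProbabilityMeasure unif01 :=
  ⟨by simp [unif01, Real.volume_Icc]⟩

lemma integrable_of_bdd {α : Type*} [MeasurableSpace α] {μ : Measure α} [IsFiniteMeasure μ]
    {f : α → ℝ} (hf : AEStronglyMeasurable f μ) {C : ℝ} (h : ∀ x, |f x| ≤ C) :
    Integrable f μ :=
  ⟨hf, HasFiniteIntegral.of_bounded (C := C)
    (ae_of_all _ (by simpa [Real.norm_eq_abs] using h))⟩

lemma step_lemma {μ : Measure ℝ} [IsFiniteMeasure μ] {h f : ℝ → ℝ}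
    (hh : Integrable h μ) (hf : Measurable f) (hf0 : ∀ x, 0 ≤ f x) (hf1 : ∀ x, f x ≤ 1) :
    ∃ A : Set ℝ, MeasurableSet A ∧ |∫ x, f x * h x ∂μ| ≤ |∫ x in A, h x ∂μ| := by
  set h' := hh.1.mk h with hh'def
  have hm : StronglyMeasurable h' := hh.1.stronglyMeasurable_mk
  have heq : h =ᵐ[μ] h' := hh.1.ae_eq_mk
  have hh' : Integrable h' μ := hh.congr heq
  set A : Set ℝ := {x | 0 ≤ h' x} with hAdef
  have hA : MeasurableSet A := measurableSet_le measurable_const hm.measurable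
  have hfh' : Integrable (fun x => f x * h' x) μ :=
    hh'.bdd_mul hf.aestronglyMeasurable (c := 1) (ae_of_all _ fun x => by
      rw [Real.norm_eq_abs, abs_of_nonneg (hf0 x)]; exact hf1 x)
  have hIeq : ∫ x, f x * h x ∂μ = ∫ x, f x * h' x ∂μ :=
    integral_congr_ae (heq.mono fun x hx => by dsimp only; rw [hx])
  have hsplit : ∫ x, f x * h' x ∂μ
      = (∫ x in A, f x * h' x ∂μ) + ∫ x in Aᶜ, f x * h' x ∂μ :=
    (integral_add_compl hA hfh').symm
  have hAnn : ∀ x ∈ A, 0 ≤ h' x := fun x hx => hx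
  have hU1 : ∫ x in A, f x * h' x ∂μ ≤ ∫ x in A, h' x ∂μ :=
    setIntegral_mono_on hfh'.integrableOn hh'.integrableOn hA
      (fun x hx => by nlinarith [hf0 x, hf1 x, hAnn x hx])
  have hU2 : ∫ x in Aᶜ, f x * h' x ∂μ ≤ 0 :=
    setIntegral_nonpos hA.compl (fun x hx => by
      have : h' x < 0 := lt_of_not_ge hx
      nlinarith [hf0 x, hf1 x])
  have hL1 : 0 ≤ ∫ x in A, f x * h' x ∂μ :=
    setIntegral_nonneg hA (fun x hx => mul_nonneg (hf0 x) (hAnn x hx))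
  have hL2 : ∫ x in Aᶜ, h' x ∂μ ≤ ∫ x in Aᶜ, f x * h' x ∂μ :=
    setIntegral_mono_on hh'.integrableOn hfh'.integrableOn hA.compl
      (fun x hx => by
        have : h' x < 0 := lt_of_not_ge hx
        nlinarith [hf0 x, hf1 x])
  have hApos : 0 ≤ ∫ x in A, h' x ∂μ := setIntegral_nonneg hA hAnn
  have hAcneg : ∫ x in Aᶜ, h' x ∂μ ≤ 0 :=
    setIntegral_nonpos hA.compl (fun x hx => le_of_lt (lt_of_not_ge hx))
  have hSA : ∫ x in A, h x ∂μ = ∫ x in A, h' x ∂μ :=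
    setIntegral_congr_ae hA (heq.mono fun x hx _ => hx)
  have hSAc : ∫ x in Aᶜ, h x ∂μ = ∫ x in Aᶜ, h' x ∂μ :=
    setIntegral_congr_ae hA.compl (heq.mono fun x hx _ => hx)
  rcases le_or_gt 0 (∫ x, f x * h' x ∂μ) with hc | hc
  · refine ⟨A, hA, ?_⟩
    rw [hIeq, abs_of_nonneg hc, hSA, abs_of_nonneg hApos]
    linarith
  · refine ⟨Aᶜ, hA.compl, ?_⟩
    rw [hIeq, abs_of_neg hc, hSAc, abs_of_nonpos hAcneg]
    linarith

/-- The rectangle (cut) norm of `U : [0,1]² → ℝ`: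
`sup_{A,B} |∫_A ∫_B U|` over measurable sets `A, B ⊆ [0,1]`. -/
noncomputable def cutNorm (U : ℝ → ℝ → ℝ) : ℝ :=
  sSup {r : ℝ | ∃ A B : Set ℝ, MeasurableSet A ∧ MeasurableSet B ∧
    r = |∫ x in A, ∫ y in B, U x y ∂unif01 ∂unif01|}

lemma cutNorm_bddAbove {D : ℝ → ℝ → ℝ} (hDb : ∀ x y, |D x y| ≤ 1) :
    BddAbove {r : ℝ | ∃ A B : Set ℝ, MeasurableSet A ∧ MeasurableSet B ∧
      r = |∫ x in A, ∫ y in B, D x y ∂unif01 ∂unif01|} := by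
  refine ⟨1, fun r hr => ?_⟩
  obtain ⟨A, B, hA, hB, rfl⟩ := hr
  have hμ : ∀ S : Set ℝ, ((unif01.restrict S) Set.univ).toReal ≤ 1 := by
    intro S
    rw [Measure.restrict_apply_univ]
    have h1 : unif01 S ≤ 1 := by
      calc unif01 S ≤ unif01 Set.univ := measure_mono (Set.subset_univ S)
        _ = 1 := measure_univ
    calc (unif01 S).toReal ≤ (1 : ENNReal).toReal :=
          ENNReal.toReal_mono (by simp) h1
      _ = 1 := by simp
  have hinner : ∀ x, |∫ y in B, D x y ∂unif01| ≤ 1 := by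
    intro x
    calc |∫ y in B, D x y ∂unif01| ≤ 1 * ((unif01.restrict B) Set.univ).toReal := by
          simpa [Real.norm_eq_abs, measureReal_def] using
            norm_integral_le_of_norm_le_const (μ := unif01.restrict B)
              (f := fun y => D x y) (C := 1)
              (ae_of_all _ fun y => by simpa [Real.norm_eq_abs] using hDb x y)
      _ ≤ 1 := by simpa using hμ B
  calc |∫ x in A, ∫ y in B, D x y ∂unif01 ∂unif01|
      ≤ 1 * ((unif01.restrict A) Set.univ).toReal := by
        simpa [Real.norm_eq_abs, measureReal_def] using
          norm_integral_le_of_norm_le_const (μ := unif01.restrict A)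
            (f := fun x => ∫ y in B, D x y ∂unif01) (C := 1)
            (ae_of_all _ fun x => by simpa [Real.norm_eq_abs] using hinner x)
    _ ≤ 1 := by simpa using hμ A

lemma le_cutNorm {D : ℝ → ℝ → ℝ} (hDb : ∀ x y, |D x y| ≤ 1)
    {A B : Set ℝ} (hA : MeasurableSet A) (hB : MeasurableSet B) :
    |∫ x in A, ∫ y in B, D x y ∂unif01 ∂unif01| ≤ cutNorm D :=
  le_csSup (cutNorm_bddAbove hDb) ⟨A, B, hA, hB, rfl⟩

lemma func_cutNorm' {D : ℝ → ℝ → ℝ} {f g : ℝ → ℝ}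
    (hD : Measurable (Function.uncurry D)) (hDb : ∀ x y, |D x y| ≤ 1)
    (hf : Measurable f) (hf0 : ∀ x, 0 ≤ f x) (hf1 : ∀ x, f x ≤ 1)
    (hg : Measurable g) (hg0 : ∀ x, 0 ≤ g x) (hg1 : ∀ x, g x ≤ 1) :
    |∫ x, ∫ y, f x * g y * D x y ∂unif01 ∂unif01| ≤ cutNorm D := by
  set μ := unif01
  have hDm : Measurable fun p : ℝ × ℝ => D p.1 p.2 := hD
  -- h x = ∫ y, g y * D x y
  set h : ℝ → ℝ := fun x => ∫ y, g y * D x y ∂μ with hhdef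
  have hK : Measurable fun p : ℝ × ℝ => g p.2 * D p.1 p.2 :=
    (hg.comp measurable_snd).mul hDm
  have hKb : ∀ p : ℝ × ℝ, |g p.2 * D p.1 p.2| ≤ 1 := fun p => by
    rw [abs_mul]
    calc |g p.2| * |D p.1 p.2| ≤ 1 * 1 :=
        mul_le_mul (by rw [abs_of_nonneg (hg0 _)]; exact hg1 _) (hDb _ _)
          (abs_nonneg _) zero_le_one
      _ = 1 := one_mul 1
  have hKint : Integrable (fun p : ℝ × ℝ => g p.2 * D p.1 p.2) (μ.prod μ) :=
    integrable_of_bdd hK.aestronglyMeasurable hKb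
  have hhint : Integrable h μ := hKint.integral_prod_left
  have heq1 : ∀ x, ∫ y, f x * g y * D x y ∂μ = f x * h x := by
    intro x
    rw [hhdef]
    simp_rw [mul_assoc]
    exact integral_const_mul _ _
  rw [show (fun x => ∫ y, f x * g y * D x y ∂μ) = fun x => f x * h x from funext heq1]
  obtain ⟨A, hA, hstep1⟩ := step_lemma hhint hf hf0 hf1
  -- swap: ∫ x in A, h x = ∫ y, g y * (∫ x in A, D x y)
  have hKintA : Integrable (fun p : ℝ × ℝ => g p.2 * D p.1 p.2) ((μ.restrict A).prod μ) :=
    integrable_of_bdd hK.aestronglyMeasurable hKb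
  have hswap1 : ∫ x in A, h x ∂μ = ∫ y, ∫ x in A, g y * D x y ∂μ ∂μ :=
    integral_integral_swap hKintA
  set h2 : ℝ → ℝ := fun y => ∫ x in A, D x y ∂μ with hh2def
  have heq2 : ∀ y, ∫ x in A, g y * D x y ∂μ = g y * h2 y := fun y =>
    integral_const_mul _ _
  have hK2 : Measurable fun p : ℝ × ℝ => D p.2 p.1 :=
    hDm.comp (measurable_snd.prodMk measurable_fst)
  have hK2int : Integrable (fun p : ℝ × ℝ => D p.2 p.1) (μ.prod (μ.restrict A)) :=
    integrable_of_bdd hK2.aestronglyMeasurable (fun p => hDb _ _)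
  have hh2int : Integrable h2 μ := hK2int.integral_prod_left
  obtain ⟨B, hB, hstep2⟩ := step_lemma hh2int hg hg0 hg1
  -- final swap
  have hK3int : Integrable (fun p : ℝ × ℝ => D p.2 p.1) ((μ.restrict B).prod (μ.restrict A)) :=
    integrable_of_bdd hK2.aestronglyMeasurable (fun p => hDb _ _)
  have hswap2 : ∫ y in B, h2 y ∂μ = ∫ x in A, ∫ y in B, D x y ∂μ ∂μ :=
    integral_integral_swap hK3int
  calc |∫ x, f x * h x ∂μ| ≤ |∫ x in A, h x ∂μ| := hstep1
    _ = |∫ y, g y * h2 y ∂μ| := by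
        rw [hswap1, show (fun y => ∫ x in A, g y * D x y ∂μ) = fun y => g y * h2 y from
          funext heq2]
    _ ≤ |∫ y in B, h2 y ∂μ| := hstep2
    _ = |∫ x in A, ∫ y in B, D x y ∂μ ∂μ| := by rw [hswap2]
    _ ≤ cutNorm D := le_cutNorm hDb hA hB

section Pi
open Function

variable {k : ℕ}

noncomputable abbrev nu (k : ℕ) : Measure (Fin k → ℝ) := Measure.pi fun _ => unif01

lemma measurePreserving_update_pi (i : Fin k) :
    MeasurePreserving (fun p : (Fin k → ℝ) × ℝ => Function.update p.1 i p.2)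
      ((nu k).prod unif01) (nu k) := by
  refine ⟨measurable_update', ?_⟩
  refine (Measure.pi_eq fun s hs => ?_).symm
  rw [Measure.map_apply measurable_update' (MeasurableSet.univ_pi hs)]
  have hset : (fun p : (Fin k → ℝ) × ℝ => Function.update p.1 i p.2) ⁻¹'
      (Set.pi Set.univ s)
      = (Set.pi Set.univ (Function.update s i Set.univ)) ×ˢ (s i) := by
    ext ⟨x, a⟩
    simp only [Set.mem_preimage, Set.mem_pi, Set.mem_univ, true_implies,
      Set.mem_prod]
    constructor
    · intro H
      refine ⟨fun j => ?_, by simpa using H i⟩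
      by_cases hj : j = i
      · subst hj; simp
      · simpa [Function.update_of_ne hj] using H j
    · rintro ⟨H1, H2⟩ j
      by_cases hj : j = i
      · subst hj; simpa using H2
      · have := H1 j
        rwa [Function.update_of_ne hj] at this ⊢
  rw [hset, Measure.prod_prod, Measure.pi_pi]
  have : ∀ j, unif01 (Function.update s i Set.univ j)
      = Function.update (fun j => unif01 (s j)) i (unif01 Set.univ) j := by
    intro j
    exact (Function.apply_update (fun _ t => unif01 t) s i Set.univ j)
  simp_rw [this]
  rw [Finset.prod_update_of_mem (Finset.mem_univ i), measure_univ, one_mul,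
    mul_comm, ← Finset.mul_prod_erase Finset.univ _ (Finset.mem_univ i),
    Finset.sdiff_singleton_eq_erase]

lemma integral_update (i : Fin k) {f : (Fin k → ℝ) → ℝ}
    (hf : Measurable f) {C : ℝ} (hb : ∀ x, |f x| ≤ C) :
    ∫ x, f x ∂(nu k) = ∫ x, ∫ a, f (Function.update x i a) ∂unif01 ∂(nu k) := by
  have hmp := measurePreserving_update_pi i
  have hcomp : Measurable fun p : (Fin k → ℝ) × ℝ => f (Function.update p.1 i p.2) :=
    hf.comp measurable_update'
  have hint : Integrable (fun p : (Fin k → ℝ) × ℝ => f (Function.update p.1 i p.2))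
      ((nu k).prod unif01) :=
    integrable_of_bdd hcomp.aestronglyMeasurable (fun p => hb _)
  calc ∫ x, f x ∂(nu k)
      = ∫ x, f x ∂(Measure.map (fun p : (Fin k → ℝ) × ℝ => Function.update p.1 i p.2)
          ((nu k).prod unif01)) := by rw [hmp.map_eq]
    _ = ∫ p, f (Function.update p.1 i p.2) ∂((nu k).prod unif01) := by
        rw [integral_map hmp.measurable.aemeasurable]
        rw [hmp.map_eq]
        exact hf.aestronglyMeasurable
    _ = ∫ x, ∫ a, f (Function.update x i a) ∂unif01 ∂(nu k) :=
        integral_prod _ hint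
end Pi

lemma core_bound {k : ℕ} {p q : Fin k} (hpq : p ≠ q) {A B : (Fin k → ℝ) → ℝ}
    {D : ℝ → ℝ → ℝ}
    (hA : Measurable A) (hA0 : ∀ x, 0 ≤ A x) (hA1 : ∀ x, A x ≤ 1)
    (hAq : ∀ x c, A (Function.update x q c) = A x)
    (hB : Measurable B) (hB0 : ∀ x, 0 ≤ B x) (hB1 : ∀ x, B x ≤ 1)
    (hBp : ∀ x c, B (Function.update x p c) = B x)
    (hD : Measurable (Function.uncurry D)) (hDb : ∀ x y, |D x y| ≤ 1) :
    |∫ x, A x * B x * D (x p) (x q) ∂(nu k)| ≤ cutNorm D := by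
  set F : (Fin k → ℝ) → ℝ := fun x => A x * B x * D (x p) (x q) with hFdef
  have hDm : Measurable fun z : ℝ × ℝ => D z.1 z.2 := hD
  have hFm : Measurable F := by
    apply (hA.mul hB).mul
    exact Measurable.comp' (f := fun x : Fin k → ℝ => (x p, x q)) hDm
      ((measurable_pi_apply p).prodMk (measurable_pi_apply q))
  have hFb : ∀ x, |F x| ≤ 1 := by
    intro x
    rw [hFdef]
    simp only [abs_mul]
    have b1 : |A x| ≤ 1 := by rw [abs_of_nonneg (hA0 x)]; exact hA1 x
    have b2 : |B x| ≤ 1 := by rw [abs_of_nonneg (hB0 x)]; exact hB1 x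
    have b3 : |D (x p) (x q)| ≤ 1 := hDb _ _
    exact mul_le_one₀ (mul_le_one₀ b1 (abs_nonneg _) b2) (abs_nonneg _) b3
  -- g x := ∫ b, F (update x q b)
  set g : (Fin k → ℝ) → ℝ := fun x => ∫ b, F (Function.update x q b) ∂unif01 with hgdef
  have hGm : Measurable fun z : (Fin k → ℝ) × ℝ => F (Function.update z.1 q z.2) :=
    hFm.comp measurable_update'
  have hgm : Measurable g :=
    (StronglyMeasurable.integral_prod_right'
      (f := fun z : (Fin k → ℝ) × ℝ => F (Function.update z.1 q z.2))
      hGm.stronglyMeasurable).measurable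
  have hgb : ∀ x, |g x| ≤ 1 := by
    intro x
    calc |g x| ≤ 1 * ((unif01 : Measure ℝ) Set.univ).toReal := by
          simpa [Real.norm_eq_abs] using
            norm_integral_le_of_norm_le_const (μ := unif01)
              (f := fun b => F (Function.update x q b)) (C := 1)
              (ae_of_all _ fun b => by simpa [Real.norm_eq_abs] using hFb _)
      _ = 1 := by simp
  have step1 : ∫ x, F x ∂(nu k) = ∫ x, g x ∂(nu k) := integral_update q hFm hFb
  have step2 : ∫ x, g x ∂(nu k) = ∫ x, ∫ a, g (Function.update x p a) ∂unif01 ∂(nu k) :=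
    integral_update p hgm hgb
  have hinner : ∀ x, |∫ a, g (Function.update x p a) ∂unif01| ≤ cutNorm D := by
    intro x
    have hre : ∀ a b, F (Function.update (Function.update x p a) q b)
        = A (Function.update x p a) * B (Function.update x q b) * D a b := by
      intro a b
      show A _ * B _ * D _ _ = _
      have e1 : (Function.update (Function.update x p a) q b) p = a := by
        rw [Function.update_of_ne hpq, Function.update_self]
      have e2 : (Function.update (Function.update x p a) q b) q = b :=
        Function.update_self _ _ _
      have e3 : A (Function.update (Function.update x p a) q b) = A (Function.update x p a) :=
        hAq _ _
      have e4 : B (Function.update (Function.update x p a) q b) = B (Function.update x q b) := by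
        rw [Function.update_comm hpq]
        exact hBp _ _
      rw [e1, e2, e3, e4]
    have : (fun a => g (Function.update x p a))
        = fun a => ∫ b, A (Function.update x p a) * B (Function.update x q b) * D a b ∂unif01 := by
      funext a
      rw [hgdef]
      simp only
      congr 1
      funext b
      rw [hre a b]
    rw [this]
    exact func_cutNorm' hD hDb
      (hA.comp (measurable_update x)) (fun a => hA0 _) (fun a => hA1 _)
      (hB.comp (measurable_update x)) (fun b => hB0 _) (fun b => hB1 _)
  calc |∫ x, F x ∂(nu k)|
      = |∫ x, ∫ a, g (Function.update x p a) ∂unif01 ∂(nu k)| := by rw [step1, step2]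
    _ ≤ cutNorm D * ((nu k) Set.univ).toReal := by
        simpa [Real.norm_eq_abs] using
          norm_integral_le_of_norm_le_const (μ := nu k)
            (f := fun x => ∫ a, g (Function.update x p a) ∂unif01) (C := cutNorm D)
            (ae_of_all _ fun x => by simpa [Real.norm_eq_abs] using hinner x)
    _ = cutNorm D := by simp

noncomputable def wgt {k : ℕ} (V : ℝ → ℝ → ℝ) (e : Sym2 (Fin k)) (x : Fin k → ℝ) : ℝ :=
  Sym2.lift ⟨fun a b => (V (x a) (x b) + V (x b) (x a)) / 2, fun a b => by ring⟩ e

lemma tDens_eq {k : ℕ} (F : SimpleGraph (Fin k)) (V : ℝ → ℝ → ℝ) :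
    tDens F V = ∫ x, ∏ e ∈ F.edgeFinset, wgt V e x ∂(nu k) := rfl

section Wgt
variable {k : ℕ} {V : ℝ → ℝ → ℝ}

lemma wgt_mk (p q : Fin k) (x : Fin k → ℝ) :
    wgt V s(p, q) x = (V (x p) (x q) + V (x q) (x p)) / 2 := rfl

lemma wgt_measurable (hV : Measurable (Function.uncurry V)) (e : Sym2 (Fin k)) :
    Measurable (wgt V e) := by
  induction e using Sym2.ind with
  | _ a b =>
    have h1 : Measurable fun x : Fin k → ℝ => V (x a) (x b) :=
      Measurable.comp' (f := fun x : Fin k → ℝ => (x a, x b)) hV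
        ((measurable_pi_apply a).prodMk (measurable_pi_apply b))
    have h2 : Measurable fun x : Fin k → ℝ => V (x b) (x a) :=
      Measurable.comp' (f := fun x : Fin k → ℝ => (x b, x a)) hV
        ((measurable_pi_apply b).prodMk (measurable_pi_apply a))
    exact (h1.add h2).div_const 2

lemma wgt_nonneg (hV : ∀ x y, V x y ∈ Set.Icc (0:ℝ) 1) (e : Sym2 (Fin k)) (x : Fin k → ℝ) :
    0 ≤ wgt V e x := by
  induction e using Sym2.ind with
  | _ a b =>
    rw [wgt_mk]
    have := (hV (x a) (x b)).1
    have := (hV (x b) (x a)).1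
    linarith

lemma wgt_le_one (hV : ∀ x y, V x y ∈ Set.Icc (0:ℝ) 1) (e : Sym2 (Fin k)) (x : Fin k → ℝ) :
    wgt V e x ≤ 1 := by
  induction e using Sym2.ind with
  | _ a b =>
    rw [wgt_mk]
    have := (hV (x a) (x b)).2
    have := (hV (x b) (x a)).2
    linarith

lemma wgt_update {e : Sym2 (Fin k)} {i : Fin k} (hi : i ∉ e) (x : Fin k → ℝ) (c : ℝ) :
    wgt V e (Function.update x i c) = wgt V e x := by
  induction e using Sym2.ind with
  | _ a b =>
    have ha : a ≠ i := fun h => hi (h ▸ Sym2.mem_mk_left a b)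
    have hb : b ≠ i := fun h => hi (h ▸ Sym2.mem_mk_right a b)
    rw [wgt_mk, wgt_mk, Function.update_of_ne ha, Function.update_of_ne hb]

lemma wgt_symm_eval (hV : ∀ x y, V x y = V y x) (p q : Fin k) (x : Fin k → ℝ) :
    wgt V s(p, q) x = V (x p) (x q) := by
  rw [wgt_mk, hV (x q) (x p)]
  ring
end Wgt

lemma telescope {k : ℕ} (F : SimpleGraph (Fin k)) (U W : ℝ → ℝ → ℝ)
    (hUmeas : Measurable (Function.uncurry U)) (hUsymm : ∀ x y, U x y = U y x)
    (hUmem : ∀ x y, U x y ∈ Set.Icc (0 : ℝ) 1)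
    (hWmeas : Measurable (Function.uncurry W)) (hWsymm : ∀ x y, W x y = W y x)
    (hWmem : ∀ x y, W x y ∈ Set.Icc (0 : ℝ) 1)
    (s : Finset (Sym2 (Fin k))) :
    s ⊆ F.edgeFinset →
      |(∫ x, (∏ e ∈ s, wgt U e x) * ∏ e ∈ F.edgeFinset \ s, wgt W e x ∂(nu k))
        - ∫ x, ∏ e ∈ F.edgeFinset, wgt W e x ∂(nu k)|
        ≤ s.card * cutNorm (fun x y => U x y - W x y) := by
  set E := F.edgeFinset with hEdef
  set D : ℝ → ℝ → ℝ := fun x y => U x y - W x y with hDdef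
  have hD : Measurable (Function.uncurry D) := by
    have : Function.uncurry D = fun z : ℝ × ℝ => Function.uncurry U z - Function.uncurry W z := by
      funext z; rfl
    rw [this]; exact hUmeas.sub hWmeas
  have hDb : ∀ x y, |D x y| ≤ 1 := by
    intro x y
    have h1 := hUmem x y
    have h2 := hWmem x y
    rw [Set.mem_Icc] at h1 h2
    rw [abs_le]
    constructor <;> simp only [hDdef] <;> linarith [h1.1, h1.2, h2.1, h2.2]
  -- measurability / bounds of combined products
  have hPmU : ∀ s1 : Finset (Sym2 (Fin k)), Measurable fun x => ∏ e ∈ s1, wgt U e x :=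
    fun s1 => Finset.measurable_prod s1 (fun e _ => wgt_measurable hUmeas e)
  have hPmW : ∀ s1 : Finset (Sym2 (Fin k)), Measurable fun x => ∏ e ∈ s1, wgt W e x :=
    fun s1 => Finset.measurable_prod s1 (fun e _ => wgt_measurable hWmeas e)
  have hP0U : ∀ (s1) (x : Fin k → ℝ), 0 ≤ ∏ e ∈ s1, wgt U e x :=
    fun s1 x => Finset.prod_nonneg fun e _ => wgt_nonneg hUmem e x
  have hP1U : ∀ (s1) (x : Fin k → ℝ), (∏ e ∈ s1, wgt U e x) ≤ 1 :=
    fun s1 x => Finset.prod_le_one (fun e _ => wgt_nonneg hUmem e x)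
      (fun e _ => wgt_le_one hUmem e x)
  have hP0W : ∀ (s1) (x : Fin k → ℝ), 0 ≤ ∏ e ∈ s1, wgt W e x :=
    fun s1 x => Finset.prod_nonneg fun e _ => wgt_nonneg hWmem e x
  have hP1W : ∀ (s1) (x : Fin k → ℝ), (∏ e ∈ s1, wgt W e x) ≤ 1 :=
    fun s1 x => Finset.prod_le_one (fun e _ => wgt_nonneg hWmem e x)
      (fun e _ => wgt_le_one hWmem e x)
  have hint : ∀ s1 s2 : Finset (Sym2 (Fin k)),
      Integrable (fun x => (∏ e ∈ s1, wgt U e x) * ∏ e ∈ s2, wgt W e x) (nu k) := by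
    intro s1 s2
    refine integrable_of_bdd ((hPmU s1).mul (hPmW s2)).aestronglyMeasurable (C := 1) ?_
    intro x
    rw [abs_of_nonneg (mul_nonneg (hP0U s1 x) (hP0W s2 x))]
    exact mul_le_one₀ (hP1U s1 x) (hP0W s2 x) (hP1W s2 x)
  induction s using Finset.induction_on with
  | empty =>
    intro _
    simp
  | @insert a t ha IH =>
    revert ha
    induction a using Sym2.ind with
    | _ p q =>
      intro ha hsub
      have haE : s(p, q) ∈ E := hsub (Finset.mem_insert_self _ _)
      have hadj : F.Adj p q := by
        rwa [hEdef, SimpleGraph.mem_edgeFinset, SimpleGraph.mem_edgeSet] at haE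
      have hpq : p ≠ q := hadj.ne
      have htE : t ⊆ E := (Finset.subset_insert _ _).trans hsub
      set C := cutNorm D with hCdef
      -- split E \ t
      have hmem : s(p, q) ∈ E \ t := Finset.mem_sdiff.2 ⟨haE, ha⟩
      have hnot : s(p, q) ∉ E \ insert s(p, q) t :=
        fun h => (Finset.mem_sdiff.1 h).2 (Finset.mem_insert_self _ _)
      have hins : insert s(p, q) (E \ insert s(p, q) t) = E \ t := by
        rw [Finset.sdiff_insert, Finset.insert_erase hmem]
      set E'' := E \ insert s(p, q) t with hE''def
      -- combined weight function
      set c : Sym2 (Fin k) → (Fin k → ℝ) → ℝ :=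
        fun e x => if e ∈ t then wgt U e x else wgt W e x with hcdef
      set R := t ∪ E'' with hRdef
      have haR : s(p, q) ∉ R := by
        rw [hRdef, Finset.mem_union]
        rintro (h | h)
        · exact ha h
        · exact hnot h
      have hdisj : Disjoint t E'' := by
        rw [Finset.disjoint_left]
        intro e het heE''
        exact (Finset.mem_sdiff.1 heE'').2 (Finset.mem_insert_of_mem het)
      have hcm : ∀ e, Measurable (c e) := by
        intro e
        by_cases h : e ∈ t <;> simp only [hcdef, h, if_true, if_false]
        · exact wgt_measurable hUmeas e
        · exact wgt_measurable hWmeas e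
      have hc0 : ∀ e x, 0 ≤ c e x := by
        intro e x
        by_cases h : e ∈ t <;> simp only [hcdef, h, if_true, if_false]
        · exact wgt_nonneg hUmem e x
        · exact wgt_nonneg hWmem e x
      have hc1 : ∀ e x, c e x ≤ 1 := by
        intro e x
        by_cases h : e ∈ t <;> simp only [hcdef, h, if_true, if_false]
        · exact wgt_le_one hUmem e x
        · exact wgt_le_one hWmem e x
      have hcu : ∀ e (i : Fin k), i ∉ e → ∀ (x : Fin k → ℝ) (v : ℝ),
          c e (Function.update x i v) = c e x := by
        intro e i hi x v
        by_cases h : e ∈ t <;> simp only [hcdef, h, if_true, if_false] <;>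
          exact wgt_update hi x v
      -- Q as product of c over R
      have hQ : ∀ x, (∏ e ∈ t, wgt U e x) * ∏ e ∈ E'', wgt W e x = ∏ e ∈ R, c e x := by
        intro x
        rw [hRdef, Finset.prod_union hdisj]
        congr 1
        · exact (Finset.prod_congr rfl fun e he => by simp [hcdef, he]).symm
        · refine (Finset.prod_congr rfl fun e he => ?_).symm
          have : e ∉ t := fun h => (Finset.mem_sdiff.1 he).2 (Finset.mem_insert_of_mem h)
          simp [hcdef, this]
      set A : (Fin k → ℝ) → ℝ := fun x => ∏ e ∈ R.filter (fun e => p ∈ e), c e x with hAdef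
      set B : (Fin k → ℝ) → ℝ := fun x => ∏ e ∈ R.filter (fun e => p ∉ e), c e x with hBdef
      have hAB : ∀ x, A x * B x = ∏ e ∈ R, c e x := fun x =>
        Finset.prod_filter_mul_prod_filter_not R _ _
      have hAm : Measurable A := Finset.measurable_prod _ (fun e _ => hcm e)
      have hBm : Measurable B := Finset.measurable_prod _ (fun e _ => hcm e)
      have hA0 : ∀ x, 0 ≤ A x := fun x => Finset.prod_nonneg fun e _ => hc0 e x
      have hA1 : ∀ x, A x ≤ 1 := fun x =>
        Finset.prod_le_one (fun e _ => hc0 e x) (fun e _ => hc1 e x)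
      have hB0 : ∀ x, 0 ≤ B x := fun x => Finset.prod_nonneg fun e _ => hc0 e x
      have hB1 : ∀ x, B x ≤ 1 := fun x =>
        Finset.prod_le_one (fun e _ => hc0 e x) (fun e _ => hc1 e x)
      have hAq : ∀ x v, A (Function.update x q v) = A x := by
        intro x v
        refine Finset.prod_congr rfl fun e he => ?_
        rw [Finset.mem_filter] at he
        have hqe : q ∉ e := by
          intro hq
          have : e = s(p, q) := ((Sym2.mem_and_mem_iff hpq).1 ⟨he.2, hq⟩)
          exact haR (this ▸ he.1)
        exact hcu e q hqe x v
      have hBp : ∀ x v, B (Function.update x p v) = B x := by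
        intro x v
        refine Finset.prod_congr rfl fun e he => ?_
        rw [Finset.mem_filter] at he
        exact hcu e p he.2 x v
      -- pointwise identity
      have hpoint : ∀ x,
          ((∏ e ∈ insert s(p, q) t, wgt U e x) * ∏ e ∈ E \ insert s(p, q) t, wgt W e x)
            - (∏ e ∈ t, wgt U e x) * ∏ e ∈ E \ t, wgt W e x
          = A x * B x * D (x p) (x q) := by
        intro x
        rw [Finset.prod_insert ha, ← hins, Finset.prod_insert hnot, hAB, ← hQ,
          wgt_symm_eval hUsymm, wgt_symm_eval hWsymm]
        simp only [hDdef]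
        ring
      have hcore : |(∫ x, (∏ e ∈ insert s(p, q) t, wgt U e x) *
            ∏ e ∈ E \ insert s(p, q) t, wgt W e x ∂(nu k))
          - ∫ x, (∏ e ∈ t, wgt U e x) * ∏ e ∈ E \ t, wgt W e x ∂(nu k)| ≤ C := by
        rw [← integral_sub (hint _ _) (hint _ _)]
        rw [show (fun x => ((∏ e ∈ insert s(p, q) t, wgt U e x) *
              ∏ e ∈ E \ insert s(p, q) t, wgt W e x)
            - (∏ e ∈ t, wgt U e x) * ∏ e ∈ E \ t, wgt W e x)
          = fun x => A x * B x * D (x p) (x q) from funext hpoint]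
        exact core_bound hpq hAm hA0 hA1 hAq hBm hB0 hB1 hBp hD hDb
      have hIH := IH htE
      calc |(∫ x, (∏ e ∈ insert s(p, q) t, wgt U e x) *
              ∏ e ∈ E \ insert s(p, q) t, wgt W e x ∂(nu k))
            - ∫ x, ∏ e ∈ E, wgt W e x ∂(nu k)|
          ≤ |(∫ x, (∏ e ∈ insert s(p, q) t, wgt U e x) *
              ∏ e ∈ E \ insert s(p, q) t, wgt W e x ∂(nu k))
            - ∫ x, (∏ e ∈ t, wgt U e x) * ∏ e ∈ E \ t, wgt W e x ∂(nu k)|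
            + |(∫ x, (∏ e ∈ t, wgt U e x) * ∏ e ∈ E \ t, wgt W e x ∂(nu k))
            - ∫ x, ∏ e ∈ E, wgt W e x ∂(nu k)| := abs_sub_le _ _ _
        _ ≤ C + t.card * C := add_le_add hcore hIH
        _ = ((insert s(p, q) t).card : ℝ) * C := by
            rw [Finset.card_insert_of_notMem ha]
            push_cast
            ring

/-- Counting lemma: for symmetric `U, W : [0,1]² → [0,1]` and every simple graph `F`,
`|t(F,U) - t(F,W)| ≤ |E(F)| ⬝ ‖U - W‖_□`. -/
theorem abs_tDens_sub_tDens_le_card_mul_cutNorm {k : ℕ} (F : SimpleGraph (Fin k))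
    (U W : ℝ → ℝ → ℝ)
    (hUmeas : Measurable (Function.uncurry U)) (hUsymm : ∀ x y, U x y = U y x)
    (hUmem : ∀ x y, U x y ∈ Set.Icc (0 : ℝ) 1)
    (hWmeas : Measurable (Function.uncurry W)) (hWsymm : ∀ x y, W x y = W y x)
    (hWmem : ∀ x y, W x y ∈ Set.Icc (0 : ℝ) 1) :
    |tDens F U - tDens F W| ≤ (F.edgeFinset.card : ℝ) * cutNorm (fun x y => U x y - W x y) := by
  have h := telescope F U W hUmeas hUsymm hUmem hWmeas hWsymm hWmem F.edgeFinset
    (Finset.Subset.refl _)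
  rw [Finset.sdiff_self] at h
  simp only [Finset.prod_empty, mul_one] at h
  rw [tDens_eq, tDens_eq]
  exact h
end

section
/- Let (k_m) and (Q_m) be as in the block-averaging setup (k_m | k_{m+1}, entries in [0,1], each Q_m obtained from Q_{m+1} by block-averaging). Then there exists a symmetric measurable function W : [0,1]^2 -> [0,1] such that W_{Q_m} -> W almost everywhere, and for all m and 1 <= i,j <= k_m, (Q_m)_{ij} = k_m^2 ∫_{(i-1)/k_m}^{i/k_m} ∫_{(j-1)/k_m}^{j/k_m} W(x,y) dx dy. -/
open MeasureTheory Finset Filter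
open scoped Classical Topology

noncomputable def blockIdx (K : ℕ) (hK : 0 < K) (x : ℝ) : Fin K :=
  ⟨min (Nat.floor (x * K)) (K - 1), by omega⟩

lemma measurable_blockIdx (K : ℕ) (hK : 0 < K) : Measurable (blockIdx K hK) := by
  have : blockIdx K hK =
      (fun n : ℕ => (⟨min n (K - 1), by omega⟩ : Fin K)) ∘ (fun x : ℝ => ⌊x * K⌋₊) := rfl
  rw [this]
  exact Measurable.of_discrete.comp (Nat.measurable_floor.comp (measurable_id.mul_const _))

lemma blockIdx_preim_subset (K : ℕ) (hK : 0 < K) (i : Fin K) :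
    Set.Icc (0:ℝ) 1 ∩ blockIdx K hK ⁻¹' {i} ⊆ Set.Icc ((i:ℝ)/K) (((i:ℝ)+1)/K) := by
  rintro x ⟨⟨hx0, hx1⟩, hx⟩
  have hK' : (0:ℝ) < K := by exact_mod_cast hK
  have hmin : min ⌊x * K⌋₊ (K - 1) = (i : ℕ) := by
    simpa [blockIdx, Fin.ext_iff] using hx
  constructor
  · have h1 : (i : ℕ) ≤ ⌊x * K⌋₊ := by omega
    have h2 : ((i : ℕ) : ℝ) ≤ x * K := le_trans (by exact_mod_cast h1)
      (Nat.floor_le (by positivity))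
    rw [div_le_iff₀ hK']
    · exact_mod_cast h2
  · rcases le_or_gt ⌊x * K⌋₊ (K - 1) with h | h
    · have hi : ⌊x * K⌋₊ = (i : ℕ) := by omega
      have : x * K < (i : ℕ) + 1 := by
        have := Nat.lt_floor_add_one (x * K)
        rw [hi] at this; exact_mod_cast this
      rw [le_div_iff₀ hK']
      linarith
    · have hi : (i : ℕ) = K - 1 := by omega
      have : ((i:ℝ) + 1) = K := by
        have : ((i:ℕ) : ℝ) = (K:ℝ) - 1 := by
          rw [hi]; push_cast [Nat.cast_sub hK]; ring
        linarith
      rw [this, le_div_iff₀ hK']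
      nlinarith

lemma subset_blockIdx_preim (K : ℕ) (hK : 0 < K) (i : Fin K) :
    Set.Ioo ((i:ℝ)/K) (((i:ℝ)+1)/K) ⊆ Set.Icc (0:ℝ) 1 ∩ blockIdx K hK ⁻¹' {i} := by
  rintro x ⟨h1, h2⟩
  have hK' : (0:ℝ) < K := by exact_mod_cast hK
  have hi1 : ((i:ℕ):ℝ) + 1 ≤ K := by exact_mod_cast i.isLt
  have hx0 : 0 ≤ x := le_trans (by positivity) h1.le
  have hx1 : x ≤ 1 := by
    have : x < ((i:ℝ)+1)/K := h2
    calc x ≤ ((i:ℝ)+1)/K := this.le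
      _ ≤ K/K := by gcongr
      _ = 1 := div_self hK'.ne'
  have hfl : ⌊x * K⌋₊ = (i : ℕ) := by
    have hlt : x * K < (i:ℕ) + 1 := by
      have := (lt_div_iff₀ hK').1 h2
      push_cast
      linarith
    have hge : ((i:ℕ):ℝ) ≤ x * K := by
      have := (div_lt_iff₀ hK').1 h1
      exact_mod_cast this.le
    have h1' : (i:ℕ) ≤ ⌊x * K⌋₊ := Nat.le_floor hge
    have h2' : ⌊x * K⌋₊ < (i:ℕ) + 1 := by
      rw [Nat.floor_lt (by positivity)]
      exact_mod_cast hlt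
    omega
  refine ⟨⟨hx0, hx1⟩, ?_⟩
  simp only [Set.mem_preimage, Set.mem_singleton_iff, blockIdx, Fin.ext_iff]
  have : (i:ℕ) ≤ K - 1 := by omega
  simp [hfl, min_eq_left this]

lemma nat_min_div (a r K : ℕ) (hr : 0 < r) (hK : 0 < K) :
    min a (K * r - 1) / r = min (a / r) (K - 1) := by
  have key : (K * r - 1) / r = K - 1 := by
    have h1 : K * r - 1 = (r - 1) + (K - 1) * r := by
      have h2 : (K - 1) * r = K * r - r := by
        cases K with
        | zero => omega
        | succ n => simp [Nat.succ_mul, Nat.add_sub_cancel]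
      have h3 : r ≤ K * r := Nat.le_mul_of_pos_left r hK
      omega
    rw [h1, Nat.add_mul_div_right _ _ hr, Nat.div_eq_of_lt (by omega)]
    omega
  rcases le_or_gt a (K * r - 1) with h | h
  · rw [min_eq_left h, min_eq_left]
    calc a / r ≤ (K * r - 1) / r := Nat.div_le_div_right h
      _ = K - 1 := key
  · rw [min_eq_right h.le, key, min_eq_right]
    have : K * r ≤ a := by omega
    have : K ≤ a / r := (Nat.le_div_iff_mul_le hr).2 (by omega)
    omega

lemma blockIdx_refine (K L : ℕ) (hK : 0 < K) (hL : 0 < L) (hd : K ∣ L) (x : ℝ) :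
    (blockIdx K hK x).val = (blockIdx L hL x).val / (L / K) := by
  obtain ⟨r, rfl⟩ := hd
  have hr : 0 < r := Nat.pos_of_mul_pos_left (a := K) (by omega)
  have h1 : ⌊x * K⌋₊ = ⌊x * (K * r)⌋₊ / r := by
    rw [← Nat.floor_div_natCast]
    congr 1
    push_cast
    field_simp
  simp only [blockIdx, Nat.mul_div_cancel_left _ hK]
  rw [h1, ← nat_min_div _ r K hr hK]
  norm_num


lemma blockIdx_preim_ae (K : ℕ) (hK : 0 < K) (i : Fin K) :
    (Set.Icc (0:ℝ) 1 ∩ blockIdx K hK ⁻¹' {i} : Set ℝ)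
      =ᵐ[volume] Set.Ioc ((i:ℝ)/K) (((i:ℝ)+1)/K) := by
  have hnull : volume (Set.Icc ((i:ℝ)/K) (((i:ℝ)+1)/K) \ Set.Ioo ((i:ℝ)/K) (((i:ℝ)+1)/K)) = 0 := by
    rcases le_or_gt ((i:ℝ)/K) (((i:ℝ)+1)/K) with h | h
    · rw [Set.Icc_diff_Ioo_same h]
      exact measure_union_null (measure_singleton _) (measure_singleton _)
    · rw [Set.Icc_eq_empty (not_le.2 h)]
      simp
  rw [MeasureTheory.ae_eq_set]
  constructor
  · refine measure_mono_null ?_ hnull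
    intro x hx
    exact ⟨blockIdx_preim_subset K hK i hx.1, fun hm => hx.2 (Set.Ioo_subset_Ioc_self hm)⟩
  · refine measure_mono_null ?_ hnull
    intro x hx
    exact ⟨Set.Ioc_subset_Icc_self hx.1, fun hm => hx.2 (subset_blockIdx_preim K hK i hm)⟩

lemma unif01_restrict_preim (K : ℕ) (hK : 0 < K) (i : Fin K) :
    unif01.restrict (blockIdx K hK ⁻¹' {i})
      = volume.restrict (Set.Ioc ((i:ℝ)/K) (((i:ℝ)+1)/K)) := by
  rw [unif01, Measure.restrict_restrict (measurable_blockIdx K hK (measurableSet_singleton i)),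
    Set.inter_comm]
  exact Measure.restrict_congr_set (blockIdx_preim_ae K hK i)

lemma unif01_preim (K : ℕ) (hK : 0 < K) (i : Fin K) :
    unif01 (blockIdx K hK ⁻¹' {i}) = ENNReal.ofReal (1 / K) := by
  have h := congrArg (fun ν : Measure ℝ => ν Set.univ) (unif01_restrict_preim K hK i)
  simp only [Measure.restrict_apply_univ, Real.volume_Ioc] at h
  rw [h]
  congr 1
  field_simp
  ring

/-- Limit of block-averaged step functions: there is a symmetric measurable
`W : [0,1]² → [0,1]` such that the step functions `W_{Q_m}` converge to `W` almost
everywhere, and each entry of `Q_m` is the average of `W` over the corresponding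
square of side `1/k_m`. -/
theorem exists_limit_graphon_of_blockAveraging (k : ℕ → ℕ) (hk : ∀ m, 0 < k m)
    (hdvd : ∀ m, k m ∣ k (m + 1))
    (Q : ∀ m, Fin (k m) → Fin (k m) → ℝ)
    (hQsymm : ∀ m i j, Q m i j = Q m j i)
    (hQmem : ∀ m i j, Q m i j ∈ Set.Icc (0 : ℝ) 1)
    (havg : ∀ m (i j : Fin (k m)),
      ((k (m + 1) / k m : ℕ) : ℝ) ^ 2 * Q m i j =
        ∑ a : Fin (k (m + 1)), ∑ b : Fin (k (m + 1)),
          if a.val / (k (m + 1) / k m) = i.val ∧ b.val / (k (m + 1) / k m) = j.val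
          then Q (m + 1) a b else 0) :
    ∃ W : ℝ → ℝ → ℝ,
      Measurable (Function.uncurry W) ∧
      (∀ x y, W x y = W y x) ∧
      (∀ x y, W x y ∈ Set.Icc (0 : ℝ) 1) ∧
      (∀ᵐ p ∂(unif01.prod unif01),
        Tendsto (fun m => Q m (blockIdx (k m) (hk m) p.1) (blockIdx (k m) (hk m) p.2))
          atTop (𝓝 (W p.1 p.2))) ∧
      (∀ m (i j : Fin (k m)),
        Q m i j = (k m : ℝ) ^ 2 *
          ∫ x in Set.Ioc ((i : ℝ) / (k m : ℝ)) (((i : ℝ) + 1) / (k m : ℝ)),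
            ∫ y in Set.Ioc ((j : ℝ) / (k m : ℝ)) (((j : ℝ) + 1) / (k m : ℝ)),
              W x y) := by
  classical
  haveI hunif_prob : IsProbabilityMeasure unif01 := ⟨by simp [unif01, Real.volume_Icc]⟩
  set μ : Measure (ℝ × ℝ) := unif01.prod unif01 with hμdef
  haveI hμprob : IsProbabilityMeasure μ := by infer_instance
  let b : ∀ m, ℝ × ℝ → Fin (k m) × Fin (k m) :=
    fun m p => (blockIdx (k m) (hk m) p.1, blockIdx (k m) (hk m) p.2)
  let f : ℕ → ℝ × ℝ → ℝ := fun m p => Q m (b m p).1 (b m p).2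
  have hb_meas : ∀ m, Measurable (b m) := fun m =>
    ((measurable_blockIdx _ _).comp measurable_fst).prodMk
      ((measurable_blockIdx _ _).comp measurable_snd)
  have hr_pos : ∀ m, 0 < k (m + 1) / k m := fun m =>
    Nat.div_pos (Nat.le_of_dvd (hk (m + 1)) (hdvd m)) (hk m)
  let π : ∀ m, Fin (k (m + 1)) → Fin (k m) := fun m a =>
    ⟨a.val / (k (m + 1) / k m), by
      refine (Nat.div_lt_iff_lt_mul (hr_pos m)).2 ?_
      rw [Nat.mul_div_cancel' (hdvd m)]
      exact a.isLt⟩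
  have hb_fac : ∀ m, b m =
      (fun q : Fin (k (m + 1)) × Fin (k (m + 1)) => (π m q.1, π m q.2)) ∘ b (m + 1) := by
    intro m
    funext p
    have h1 : ∀ x, blockIdx (k m) (hk m) x = π m (blockIdx (k (m + 1)) (hk (m + 1)) x) :=
      fun x => Fin.ext (blockIdx_refine (k m) (k (m + 1)) (hk m) (hk (m + 1)) (hdvd m) x)
    show (blockIdx (k m) (hk m) p.1, blockIdx (k m) (hk m) p.2) = _
    rw [h1 p.1, h1 p.2]
    rfl
  let ℱ : Filtration ℕ (inferInstance : MeasurableSpace (ℝ × ℝ)) :=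
    { seq := fun m => MeasurableSpace.comap (b m) inferInstance
      mono' := monotone_nat_of_le_succ fun m => by
        rw [hb_fac m, ← MeasurableSpace.comap_comp]
        exact MeasurableSpace.comap_mono (measurable_iff_comap_le.1 Measurable.of_discrete)
      le' := fun m => measurable_iff_comap_le.1 (hb_meas m) }
  have hf_adapted : StronglyAdapted ℱ f := by
    intro m
    apply Measurable.stronglyMeasurable
    have hbm : Measurable[ℱ m] (b m) := fun t ht => ⟨t, ht, rfl⟩
    exact Measurable.comp (g := fun q : Fin (k m) × Fin (k m) => Q m q.1 q.2)
      Measurable.of_discrete hbm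
  have hf_meas : ∀ m, Measurable (f m) := fun m =>
    Measurable.comp (g := fun q : Fin (k m) × Fin (k m) => Q m q.1 q.2)
      Measurable.of_discrete (hb_meas m)
  have hf_norm : ∀ m p, ‖f m p‖ ≤ 1 := by
    intro m p
    rw [Real.norm_eq_abs, abs_le]
    have h := hQmem m (b m p).1 (b m p).2
    exact ⟨by linarith [h.1], h.2⟩
  have hf_int : ∀ m, Integrable (f m) μ := fun m =>
    (integrable_const (1 : ℝ)).mono' (hf_meas m).aestronglyMeasurable
      (ae_of_all _ (hf_norm m))
  have hpre : ∀ m (q : Fin (k m) × Fin (k m)),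
      b m ⁻¹' {q} = (blockIdx (k m) (hk m) ⁻¹' {q.1}) ×ˢ (blockIdx (k m) (hk m) ⁻¹' {q.2}) := by
    intro m q
    ext p
    simp [b, Set.mem_prod, Prod.ext_iff]
  have hatom_meas : ∀ m (q : Fin (k m) × Fin (k m)), MeasurableSet (b m ⁻¹' {q}) :=
    fun m q => hb_meas m (measurableSet_singleton q)
  have hμatom : ∀ m (q : Fin (k m) × Fin (k m)),
      μ (b m ⁻¹' {q}) = ENNReal.ofReal (1 / (k m : ℝ) ^ 2) := by
    intro m q
    rw [hpre m q, hμdef, Measure.prod_prod, unif01_preim, unif01_preim,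
      ← ENNReal.ofReal_mul (by positivity)]
    congr 1
    rw [sq]
    field_simp
  have hatom_int : ∀ m (q : Fin (k m) × Fin (k m)),
      ∫ p in b m ⁻¹' {q}, f m p ∂μ = Q m q.1 q.2 / (k m : ℝ) ^ 2 := by
    intro m q
    rw [setIntegral_congr_fun (hatom_meas m q) (g := fun _ => Q m q.1 q.2) ?_,
      setIntegral_const, measureReal_def, hμatom m q, ENNReal.toReal_ofReal (by positivity), smul_eq_mul]
    · ring
    · intro p hp
      have hpq : b m p = q := hp
      show Q m (b m p).1 (b m p).2 = Q m q.1 q.2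
      rw [hpq]
  have hatom_succ : ∀ m (q : Fin (k m) × Fin (k m)),
      ∫ p in b m ⁻¹' {q}, f (m + 1) p ∂μ = Q m q.1 q.2 / (k m : ℝ) ^ 2 := by
    intro m q
    have hkk : k m * (k (m + 1) / k m) = k (m + 1) := Nat.mul_div_cancel' (hdvd m)
    set S : Finset (Fin (k (m + 1)) × Fin (k (m + 1))) :=
      Finset.univ.filter (fun a => π m a.1 = q.1 ∧ π m a.2 = q.2) with hSdef
    have hdecomp : b m ⁻¹' {q} = ⋃ a ∈ S, b (m + 1) ⁻¹' {a} := by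
      ext p
      simp only [Set.mem_preimage, Set.mem_singleton_iff, Set.mem_iUnion, hSdef,
        Finset.mem_filter, Finset.mem_univ, true_and]
      rw [hb_fac m]
      constructor
      · intro h
        exact ⟨b (m + 1) p, ⟨(Prod.ext_iff.1 h).1, (Prod.ext_iff.1 h).2⟩, rfl⟩
      · rintro ⟨a, ⟨h1, h2⟩, rfl⟩
        show (π m (b (m + 1) p).1, π m (b (m + 1) p).2) = q
        rw [h1, h2]
    have hdisj : (↑S : Set (Fin (k (m + 1)) × Fin (k (m + 1)))).Pairwise
        (Function.onFun Disjoint fun a => b (m + 1) ⁻¹' {a}) := by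
      intro a _ a' _ hne
      exact Disjoint.preimage _ (by simp [hne])
    rw [hdecomp, integral_biUnion_finset S (fun a _ => hatom_meas (m + 1) a) hdisj
      (fun a _ => (hf_int (m + 1)).integrableOn)]
    have hterm : ∀ a ∈ S, ∫ p in b (m + 1) ⁻¹' {a}, f (m + 1) p ∂μ
        = Q (m + 1) a.1 a.2 / (k (m + 1) : ℝ) ^ 2 := fun a _ => hatom_int (m + 1) a
    rw [Finset.sum_congr rfl hterm, ← Finset.sum_div]
    have hsum : ∑ a ∈ S, Q (m + 1) a.1 a.2
        = ((k (m + 1) / k m : ℕ) : ℝ) ^ 2 * Q m q.1 q.2 := by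
      rw [hSdef, Finset.sum_filter, Fintype.sum_prod_type, havg m q.1 q.2]
      refine Finset.sum_congr rfl fun a _ => Finset.sum_congr rfl fun c _ => ?_
      refine if_congr ?_ rfl rfl
      rw [Fin.ext_iff, Fin.ext_iff]
    rw [hsum]
    have hkm0 : ((k m : ℝ)) ≠ 0 := Nat.cast_ne_zero.2 (hk m).ne'
    have hr0 : (((k (m + 1) / k m : ℕ) : ℝ)) ≠ 0 := Nat.cast_ne_zero.2 (hr_pos m).ne'
    have hcast : (k (m + 1) : ℝ) = (k m : ℝ) * ((k (m + 1) / k m : ℕ) : ℝ) := by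
      exact_mod_cast hkk.symm
    rw [hcast]
    field_simp
  have hset : ∀ m (s : Set (ℝ × ℝ)), MeasurableSet[ℱ m] s →
      ∫ p in s, f m p ∂μ = ∫ p in s, f (m + 1) p ∂μ := by
    intro m s hs
    obtain ⟨t, -, rfl⟩ := hs
    have hdecomp : b m ⁻¹' t = ⋃ q ∈ (Set.toFinite t).toFinset, b m ⁻¹' {q} := by
      ext p
      simp only [Set.mem_preimage, Set.mem_iUnion, Set.Finite.mem_toFinset,
        Set.mem_singleton_iff]
      exact ⟨fun h => ⟨b m p, h, rfl⟩, fun ⟨q, hq, h⟩ => by rw [h]; exact hq⟩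
    have hdisj : (↑(Set.toFinite t).toFinset : Set (Fin (k m) × Fin (k m))).Pairwise
        (Function.onFun Disjoint fun q => b m ⁻¹' {q}) := by
      intro a _ a' _ hne
      exact Disjoint.preimage _ (by simp [hne])
    rw [hdecomp,
      integral_biUnion_finset _ (fun q _ => hatom_meas m q) hdisj
        (fun q _ => (hf_int m).integrableOn),
      integral_biUnion_finset _ (fun q _ => hatom_meas m q) hdisj
        (fun q _ => (hf_int (m + 1)).integrableOn)]
    exact Finset.sum_congr rfl fun q _ => by rw [hatom_int m q, hatom_succ m q]
  have hmart : Martingale f ℱ μ := martingale_of_setIntegral_eq_succ hf_adapted hf_int hset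
  have hbdd : ∀ n, eLpNorm (f n) 1 μ ≤ ((1 : NNReal) : ENNReal) := by
    intro n
    refine le_trans (eLpNorm_le_of_ae_bound (C := 1) (ae_of_all _ (hf_norm n))) ?_
    simp
  set g : ℝ × ℝ → ℝ := ℱ.limitProcess f μ with hgdef
  have hconv : ∀ᵐ p ∂μ, Tendsto (fun n => f n p) atTop (𝓝 (g p)) :=
    hmart.submartingale.ae_tendsto_limitProcess hbdd
  have hg_meas : Measurable g := by
    have h1 := MeasureTheory.Filtration.stronglyMeasurable_limitProcess (f := f) (ℱ := ℱ) (μ := μ)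
    exact h1.measurable.mono (iSup_le fun n => ℱ.le n) le_rfl
  have hswap : MeasurePreserving Prod.swap μ μ := Measure.measurePreserving_swap
  have hswap_conv : ∀ᵐ p ∂μ, Tendsto (fun n => f n p) atTop (𝓝 (g p.swap)) := by
    have h2 := hswap.quasiMeasurePreserving.ae hconv
    refine h2.mono fun p hp => ?_
    refine Tendsto.congr (fun n => ?_) hp
    show Q n (blockIdx (k n) (hk n) p.2) (blockIdx (k n) (hk n) p.1) = f n p
    exact hQsymm n _ _
  have hsym_ae : ∀ᵐ p ∂μ, g p.swap = g p := by
    filter_upwards [hconv, hswap_conv] with p h1 h2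
    exact tendsto_nhds_unique h2 h1
  have hmem_ae : ∀ᵐ p ∂μ, g p ∈ Set.Icc (0 : ℝ) 1 := by
    filter_upwards [hconv] with p h1
    constructor
    · exact ge_of_tendsto' h1 fun n => (hQmem n _ _).1
    · exact le_of_tendsto' h1 fun n => (hQmem n _ _).2
  set W : ℝ → ℝ → ℝ := fun x y => max 0 (min 1 ((g (x, y) + g (y, x)) / 2)) with hWdef
  have hW_ae : ∀ᵐ p ∂μ, W p.1 p.2 = g p := by
    filter_upwards [hsym_ae, hmem_ae] with p h2 h34
    show max 0 (min 1 ((g (p.1, p.2) + g (p.2, p.1)) / 2)) = g p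
    rw [Prod.mk.eta, show g (p.2, p.1) = g p from h2, add_self_div_two,
      min_eq_right h34.2, max_eq_right h34.1]
  have hconvW : ∀ᵐ p ∂μ, Tendsto (fun n => f n p) atTop (𝓝 (W p.1 p.2)) := by
    filter_upwards [hconv, hW_ae] with p h1 h2
    rw [h2]
    exact h1
  refine ⟨W, ?_, ?_, ?_, ?_, ?_⟩
  · have huncurry : Function.uncurry W = fun p : ℝ × ℝ => max 0 (min 1 ((g p + g p.swap) / 2)) := by
      funext p
      show max 0 (min 1 ((g (p.1, p.2) + g (p.2, p.1)) / 2)) = _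
      rw [Prod.mk.eta]
      rfl
    rw [huncurry]
    exact measurable_const.max (measurable_const.min
      ((hg_meas.add (hg_meas.comp measurable_swap)).div_const 2))
  · intro x y
    show max 0 (min 1 ((g (x, y) + g (y, x)) / 2)) = max 0 (min 1 ((g (y, x) + g (x, y)) / 2))
    rw [add_comm]
  · intro x y
    exact ⟨le_max_left _ _, max_le zero_le_one (min_le_left _ _)⟩
  · exact hconvW
  · intro m i j
    have hFmeas : MeasurableSet[ℱ m] (b m ⁻¹' {((i, j) : Fin (k m) × Fin (k m))}) :=
      ⟨{(i, j)}, MeasurableSet.of_discrete, rfl⟩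
    have hconst : ∀ n, m ≤ n →
        ∫ p in b m ⁻¹' {((i, j) : Fin (k m) × Fin (k m))}, f n p ∂μ = Q m i j / (k m : ℝ) ^ 2 := by
      intro n hn
      rw [← hmart.setIntegral_eq hn hFmeas, hatom_int m (i, j)]
    have htend : Tendsto (fun n => ∫ p in b m ⁻¹' {((i, j) : Fin (k m) × Fin (k m))}, f n p ∂μ)
        atTop (𝓝 (∫ p in b m ⁻¹' {((i, j) : Fin (k m) × Fin (k m))}, W p.1 p.2 ∂μ)) := by
      apply tendsto_integral_of_dominated_convergence (bound := fun _ => (1 : ℝ))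
      · exact fun n => (hf_meas n).aestronglyMeasurable.restrict
      · exact integrable_const 1
      · exact fun n => ae_of_all _ (hf_norm n)
      · exact ae_restrict_of_ae hconvW
    have hlim : ∫ p in b m ⁻¹' {((i, j) : Fin (k m) × Fin (k m))}, W p.1 p.2 ∂μ
        = Q m i j / (k m : ℝ) ^ 2 := by
      have hc : Tendsto (fun n => ∫ p in b m ⁻¹' {((i, j) : Fin (k m) × Fin (k m))}, f n p ∂μ)
          atTop (𝓝 (Q m i j / (k m : ℝ) ^ 2)) := by
        refine Tendsto.congr' ?_ tendsto_const_nhds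
        filter_upwards [eventually_ge_atTop m] with n hn
        exact (hconst n hn).symm
      exact (tendsto_nhds_unique hc htend).symm
    have hresteq : μ.restrict (b m ⁻¹' {((i, j) : Fin (k m) × Fin (k m))}) =
        (volume.restrict (Set.Ioc ((i : ℝ) / (k m : ℝ)) (((i : ℝ) + 1) / (k m : ℝ)))).prod
          (volume.restrict (Set.Ioc ((j : ℝ) / (k m : ℝ)) (((j : ℝ) + 1) / (k m : ℝ)))) := by
      rw [hpre m (i, j), hμdef, ← Measure.prod_restrict]
      rw [unif01_restrict_preim (k m) (hk m) i, unif01_restrict_preim (k m) (hk m) j]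
    haveI h1fin : IsFiniteMeasure
        (volume.restrict (Set.Ioc ((i : ℝ) / (k m : ℝ)) (((i : ℝ) + 1) / (k m : ℝ)))) :=
      ⟨by rw [Measure.restrict_apply_univ]; exact measure_Ioc_lt_top⟩
    haveI h2fin : IsFiniteMeasure
        (volume.restrict (Set.Ioc ((j : ℝ) / (k m : ℝ)) (((j : ℝ) + 1) / (k m : ℝ)))) :=
      ⟨by rw [Measure.restrict_apply_univ]; exact measure_Ioc_lt_top⟩
    have hWuncmeas : Measurable (fun p : ℝ × ℝ => W p.1 p.2) := by
      exact measurable_const.max (measurable_const.min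
        (((hg_meas.comp (measurable_fst.prodMk measurable_snd)).add
          (hg_meas.comp (measurable_snd.prodMk measurable_fst))).div_const 2))
    have hWnorm : ∀ p : ℝ × ℝ, ‖W p.1 p.2‖ ≤ 1 := by
      intro p
      rw [Real.norm_eq_abs, abs_le]
      constructor
      · have := le_max_left (0:ℝ) (min 1 ((g (p.1, p.2) + g (p.2, p.1)) / 2))
        linarith
      · exact max_le zero_le_one (min_le_left _ _)
    have hWint : Integrable (fun p : ℝ × ℝ => W p.1 p.2)
        ((volume.restrict (Set.Ioc ((i : ℝ) / (k m : ℝ)) (((i : ℝ) + 1) / (k m : ℝ)))).prod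
          (volume.restrict (Set.Ioc ((j : ℝ) / (k m : ℝ)) (((j : ℝ) + 1) / (k m : ℝ))))) :=
      (integrable_const (1 : ℝ)).mono' hWuncmeas.aestronglyMeasurable (ae_of_all _ hWnorm)
    have hiter : ∫ p in b m ⁻¹' {((i, j) : Fin (k m) × Fin (k m))}, W p.1 p.2 ∂μ
        = ∫ x in Set.Ioc ((i : ℝ) / (k m : ℝ)) (((i : ℝ) + 1) / (k m : ℝ)),
            ∫ y in Set.Ioc ((j : ℝ) / (k m : ℝ)) (((j : ℝ) + 1) / (k m : ℝ)), W x y := by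
      rw [hresteq]
      exact integral_prod _ hWint
    rw [← hiter, hlim]
    have hkm0 : ((k m : ℝ)) ≠ 0 := Nat.cast_ne_zero.2 (hk m).ne'
    field_simp
end
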